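/- Let fill : ℕ → ℕ satisfy the ortree invariant. Fix indices p and j with node 2p an ancestor of leaf 2j+1 and 2p ≤ 2j (p as in the LCA computation). Then the iteration: f := 0, a := j - p; while a ≠ 0, s := a AND (-a) (lowest set bit), a := a - s, f := f OR fill(2p + 2a + s); terminates and yields f = ⋁ { fill(t) : t odd, 2p < t < 2j }. -/

import Mathlib

/-- Lowest set bit of `a` (equals `a &&& -a` in two's complement). -/
def lowBit (a : ℕ) : ℕ := a - (a &&& (a - 1))

/-- Bitwise OR of `fill` over all odd indices `t` with `lo < t < hi`. -/
def ortreeOr (fill : ℕ → ℕ) (lo hi : ℕ) : ℕ :=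
  (((List.range hi).filter (fun t => decide (lo < t) && decide (t % 2 = 1))).map fill).foldr
    (· ||| ·) 0

/-- The second loop of `ortree_or_x2`: with the loop variable `a = j - p`,
while `a ≠ 0`, take `s := lowBit a`, set `a := a - s` and or in
`fill (2p + 2a + s)`. Executed with fuel `a`, which suffices for termination. -/
def ortreeLoop2 (fill : ℕ → ℕ) (p : ℕ) : ℕ → ℕ → ℕ
  | 0, _ => 0
  | fuel + 1, a =>
    if a = 0 then 0
    else
      ortreeLoop2 fill p fuel (a - lowBit a) ||| fill (2 * p + 2 * (a - lowBit a) + lowBit a)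

lemma land_odd (c : ℕ) : (2*c+1) &&& (2*c) = 2*c := by
  apply Nat.eq_of_testBit_eq
  intro i
  rw [Nat.testBit_land]
  cases i with
  | zero => simp [Nat.testBit_zero, Nat.mul_mod_right]
  | succ i =>
    have h1 : (2*c+1)/2 = c := by omega
    have h2 : (2*c)/2 = c := by omega
    simp only [Nat.testBit_succ, h1, h2, Bool.and_self]

lemma land_double (b : ℕ) : (2*b) &&& (2*b - 1) = 2*(b &&& (b-1)) := by
  apply Nat.eq_of_testBit_eq
  intro i
  rw [Nat.testBit_land]
  cases i with
  | zero => simp [Nat.testBit_zero, Nat.mul_mod_right]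
  | succ i =>
    have h1 : (2*b)/2 = b := by omega
    have h2 : (2*b-1)/2 = b-1 := by omega
    have h3 : (2*(b &&& (b-1)))/2 = b &&& (b-1) := by omega
    simp only [Nat.testBit_succ, h1, h2, h3, Nat.testBit_land]

lemma lowBit_spec (k c : ℕ) : lowBit (2^k * (2*c+1)) = 2^k := by
  induction k with
  | zero => simp [lowBit, land_odd, Nat.add_sub_cancel]
  | succ k ih =>
    unfold lowBit at *
    have h : 2^(k+1) * (2*c+1) = 2 * (2^k * (2*c+1)) := by ring
    rw [h, land_double]
    have hle : (2^k * (2*c+1)) &&& (2^k * (2*c+1) - 1) ≤ 2^k * (2*c+1) := by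
      calc _ ≤ 2^k * (2*c+1) - 1 := Nat.and_le_right
      _ ≤ _ := Nat.sub_le _ _
    omega

lemma foldr_or_append (l1 l2 : List ℕ) :
    (l1 ++ l2).foldr (· ||| ·) 0 = l1.foldr (· ||| ·) 0 ||| l2.foldr (· ||| ·) 0 := by
  induction l1 with
  | nil => simp
  | cons x l ih => simp [ih, Nat.or_assoc]

lemma ortreeOr_empty (fill : ℕ → ℕ) (lo hi : ℕ) (h : hi ≤ lo + 1) : ortreeOr fill lo hi = 0 := by
  unfold ortreeOr
  have h2 : (List.range hi).filter (fun t => decide (lo < t) && decide (t % 2 = 1)) = [] := by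
    apply List.filter_eq_nil_iff.mpr
    intro t ht
    have := List.mem_range.mp ht
    simp only [Bool.and_eq_true, decide_eq_true_eq]
    omega
  rw [h2]; rfl

lemma ortreeOr_single (fill : ℕ → ℕ) (m : ℕ) (hm : m % 2 = 1) :
    ortreeOr fill (m - 1) (m + 1) = fill m := by
  unfold ortreeOr
  have h1 : List.range (m+1) = List.range m ++ [m] := List.range_succ
  rw [h1, List.filter_append]
  have h2 : (List.range m).filter (fun t => decide (m - 1 < t) && decide (t % 2 = 1)) = [] := by
    apply List.filter_eq_nil_iff.mpr
    intro t ht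
    have := List.mem_range.mp ht
    simp only [Bool.and_eq_true, decide_eq_true_eq]
    omega
  have h3 : ([m] : List ℕ).filter (fun t => decide (m - 1 < t) && decide (t % 2 = 1)) = [m] := by
    simp [hm]; omega
  rw [h2, h3]
  simp

lemma ortreeOr_split (fill : ℕ → ℕ) (lo mid hi : ℕ) (h1 : lo ≤ mid) (h2 : mid ≤ hi)
    (he : mid % 2 = 0) :
    ortreeOr fill lo hi = ortreeOr fill lo mid ||| ortreeOr fill mid hi := by
  unfold ortreeOr
  have hr : List.range hi = List.range mid ++ (List.range (hi - mid)).map (fun x => mid + x) := by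
    rw [← List.range_add]; congr 1; omega
  have hC : (List.range mid).filter (fun t => decide (mid < t) && decide (t % 2 = 1)) = [] := by
    apply List.filter_eq_nil_iff.mpr
    intro t ht
    have := List.mem_range.mp ht
    simp only [Bool.and_eq_true, decide_eq_true_eq]
    omega
  have hB : ((List.range (hi - mid)).map (fun x => mid + x)).filter
        (fun t => decide (lo < t) && decide (t % 2 = 1)) =
      ((List.range (hi - mid)).map (fun x => mid + x)).filter
        (fun t => decide (mid < t) && decide (t % 2 = 1)) := by
    apply List.filter_congr
    intro t ht
    obtain ⟨x, -, rfl⟩ := List.mem_map.mp ht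
    by_cases h : (mid + x) % 2 = 1
    · have hiff : lo < mid + x ↔ mid < mid + x := by omega
      rw [decide_eq_decide.mpr hiff]
    · simp [h]
  rw [hr, List.filter_append, List.filter_append, hB, hC, List.nil_append, List.map_append,
    foldr_or_append]

section
variable (fill : ℕ → ℕ)
    (hinv : ∀ q s, 1 ≤ s →
      fill (q * 2 ^ (s + 1) + 2 ^ s) =
        fill (q * 2 ^ (s + 1) + 2 ^ s - 2 ^ (s - 1)) |||
          fill (q * 2 ^ (s + 1) + 2 ^ s + 2 ^ (s - 1)))

include hinv in
/-- A node `m` with 2-adic valuation `k` stores the OR of the leaves below it. -/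
lemma fill_subtree : ∀ k m, m % 2^(k+1) = 2^k →
    fill m = ortreeOr fill (m - 2^k) (m + 2^k) := by
  intro k
  induction k with
  | zero =>
    intro m hm
    rw [pow_zero] at *
    rw [pow_one] at hm
    exact (ortreeOr_single fill m hm).symm
  | succ k ih =>
    intro m hm
    have hPpos : 0 < 2^k := Nat.pow_pos (by norm_num)
    have h2P : (2:ℕ)^(k+1) = 2*2^k := by ring
    obtain ⟨q, hq⟩ : ∃ q, m = q * 2^(k+1+1) + 2^(k+1) :=
      ⟨m / 2^(k+1+1), by rw [← hm]; exact (Nat.div_add_mod' m (2^(k+1+1))).symm⟩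
    have hinv' := hinv q (k+1) (by omega)
    simp only [Nat.add_sub_cancel] at hinv'
    rw [← hq] at hinv'
    have hA : q * 2^(k+1+1) = 2^(k+1)*(2*q) := by ring
    have hA2 : q * 2^(k+1+1) = 4*(q * 2^k) := by ring
    have hml : (m - 2^k) % 2^(k+1) = 2^k := by
      have h5 : m - 2^k = 2^(k+1)*(2*q) + 2^k := by omega
      rw [h5, Nat.mul_add_mod]
      exact Nat.mod_eq_of_lt (by omega)
    have hmr : (m + 2^k) % 2^(k+1) = 2^k := by
      have hA3 : 2^(k+1)*(2*q+1) = 2^(k+1)*(2*q) + 2^(k+1) := by ring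
      have h5 : m + 2^k = 2^(k+1)*(2*q+1) + 2^k := by omega
      rw [h5, Nat.mul_add_mod]
      exact Nat.mod_eq_of_lt (by omega)
    have ihl := ih (m - 2^k) hml
    have ihr := ih (m + 2^k) hmr
    have e1 : m - 2^k - 2^k = m - 2^(k+1) := by omega
    have e2 : m - 2^k + 2^k = m := by omega
    have e3 : m + 2^k - 2^k = m := by omega
    have e4 : m + 2^k + 2^k = m + 2^(k+1) := by omega
    rw [e1, e2] at ihl
    rw [e3, e4] at ihr
    rw [ortreeOr_split fill (m - 2^(k+1)) m (m + 2^(k+1)) (by omega) (by omega) (by omega)]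
    rw [hinv', ihl, ihr]

include hinv in
/-- Correctness of the second loop, by induction on the fuel. -/
lemma loop_eq (p t : ℕ) (hdvd : 2^(t+1) ∣ 2*p) :
    ∀ fuel a, a ≤ fuel → a < 2^t →
      ortreeLoop2 fill p fuel a = ortreeOr fill (2*p) (2*p + 2*a) := by
  intro fuel
  induction fuel with
  | zero =>
    intro a ha _
    have h0 : a = 0 := by omega
    subst h0
    rw [show ortreeLoop2 fill p 0 0 = 0 from rfl,
      ortreeOr_empty fill (2*p) (2*p + 2*0) (by omega)]
  | succ fuel ih =>
    intro a ha hat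
    rw [ortreeLoop2]
    by_cases h0 : a = 0
    · subst h0
      rw [if_pos rfl, ortreeOr_empty fill (2*p) (2*p + 2*0) (by omega)]
    · rw [if_neg h0]
      obtain ⟨k, mm, hodd, hkm⟩ := Nat.exists_eq_two_pow_mul_odd h0
      obtain ⟨c, rfl⟩ := hodd
      have hlb : lowBit a = 2^k := by rw [hkm]; exact lowBit_spec k c
      have hPpos : 0 < 2^k := Nat.pow_pos (by norm_num)
      have hsle : 2^k ≤ a := by
        have : 2^k * 1 ≤ 2^k * (2*c+1) := Nat.mul_le_mul_left _ (by omega)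
        omega
      have hkt : k + 1 ≤ t := by
        by_contra hc
        push_neg at hc
        have : 2^t ≤ 2^k := Nat.pow_le_pow_right (by norm_num) (by omega)
        omega
      obtain ⟨d, hd⟩ : 2^(k+1) ∣ 2*p := dvd_trans (pow_dvd_pow 2 (by omega)) hdvd
      have hams : a - 2^k = 2*2^k*c := by
        have : 2^k*(2*c+1) = 2*2^k*c + 2^k := by ring
        omega
      have hnode : (2*p + 2*(a - lowBit a) + lowBit a) % 2^(k+1) = 2^k := by
        rw [hlb, hams, hd]
        have h7 : 2^(k+1)*d + 2*(2*2^k*c) + 2^k = 2^(k+1)*(d + 2*c) + 2^k := by ring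
        rw [h7, Nat.mul_add_mod]
        have h2P : (2:ℕ)^(k+1) = 2*2^k := by ring
        exact Nat.mod_eq_of_lt (by omega)
      have hfill := fill_subtree fill hinv k _ hnode
      have e1 : 2*p + 2*(a - lowBit a) + lowBit a - 2^k = 2*p + 2*(a - 2^k) := by
        rw [hlb]; omega
      have e2 : 2*p + 2*(a - lowBit a) + lowBit a + 2^k = 2*p + 2*a := by
        rw [hlb]; omega
      rw [e1, e2] at hfill
      rw [hlb] at hfill
      have hih := ih (a - lowBit a) (by omega) (by omega)
      rw [hlb] at hih
      rw [hlb, hih, hfill]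
      rw [ortreeOr_split fill (2*p) (2*p + 2*(a - 2^k)) (2*p + 2*a) (by omega) (by omega)
        (by omega)]
end

/-- In the interlaced ortree with the invariant that every internal node stores
the OR of its children, if the node `2p` is an ancestor of the leaf `2j+1` with
`2p ≤ 2j`, then the second loop of `ortree_or_x2` terminates and computes the
OR of `fill` over the odd leaf indices strictly between `2p` and `2j`. -/
theorem ortree_or_second_loop
    (fill : ℕ → ℕ)
    (hinv : ∀ q s, 1 ≤ s →
      fill (q * 2 ^ (s + 1) + 2 ^ s) =
        fill (q * 2 ^ (s + 1) + 2 ^ s - 2 ^ (s - 1)) |||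
          fill (q * 2 ^ (s + 1) + 2 ^ s + 2 ^ (s - 1)))
    (p j : ℕ) (hpj : p ≤ j)
    (hanc : ∃ q s, 1 ≤ s ∧ 2 * p = q * 2 ^ (s + 1) + 2 ^ s ∧
      2 * p - 2 ^ s < 2 * j + 1 ∧ 2 * j + 1 < 2 * p + 2 ^ s) :
    ortreeLoop2 fill p (j - p) (j - p) = ortreeOr fill (2 * p) (2 * j) := by
  obtain ⟨q, s, hs, h2p, -, hlt⟩ := hanc
  have hdvd : 2^s ∣ 2*p := ⟨2*q + 1, by rw [h2p]; ring⟩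
  have hsplit : (2:ℕ)^s = 2*2^(s-1) := by
    rw [← pow_succ']
    congr 1
    omega
  have hdvd' : 2^((s-1)+1) ∣ 2*p := by
    have h : (s-1)+1 = s := by omega
    rw [h]; exact hdvd
  have ha : j - p < 2^(s-1) := by omega
  have hj : 2*j = 2*p + 2*(j-p) := by omega
  rw [hj]
  exact loop_eq fill hinv p (s-1) hdvd' (j-p) (j-p) le_rfl ha
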